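/- Let n ≥ 1 and 0 ≤ β < α ≤ 1, and consider single participation (k = 1, b = n). Then (1/n) · Σ_{j=0}^{n−1} Σ_{i=0}^{n−1−j} c_i² ≤ (1/√n) · sens_{1,n}(C_{α,β}) · ‖C_{α,β}‖_F ≤ Σ_{i=0}^{n−1} c_i². -/

import Mathlib

open Finset Matrix

/-- `r_m = (1/4^m)·C(2m,m)`. -/
noncomputable def rCoef (m : ℕ) : ℝ := (1 / 4 ^ m) * (Nat.choose (2 * m) m : ℝ)

/-- `c_m = Σ_{i=0}^{m} α^{m−i} r_{m−i} r_i β^i`. -/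
noncomputable def cCoef (α β : ℝ) (m : ℕ) : ℝ :=
  ∑ i ∈ Finset.range (m + 1), α ^ (m - i) * rCoef (m - i) * rCoef i * β ^ i

/-- The square root factor `C_{α,β}`, lower triangular Toeplitz with entries `c_{i-j}`. -/
noncomputable def Cmat (n : ℕ) (α β : ℝ) : Matrix (Fin n) (Fin n) ℝ :=
  Matrix.of fun i j => if (j : ℕ) ≤ (i : ℕ) then cCoef α β ((i : ℕ) - (j : ℕ)) else 0

/-- The `b`-min-separated `L2`-sensitivity with at most `k` participations. -/
noncomputable def sens (n b k : ℕ) (C : Matrix (Fin n) (Fin n) ℝ) : ℝ :=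
  Real.sqrt (sSup { x : ℝ | ∃ π : Finset (Fin n), π.card ≤ k ∧
    (∀ i ∈ π, ∀ j ∈ π, i ≠ j → b ≤ Nat.dist (i : ℕ) (j : ℕ)) ∧
    x = ∑ i ∈ π, ∑ j ∈ π, (Cᵀ * C) i j })

/-- The Frobenius norm. -/
noncomputable def frob (n : ℕ) (C : Matrix (Fin n) (Fin n) ℝ) : ℝ :=
  Real.sqrt (∑ i : Fin n, ∑ j : Fin n, (C i j) ^ 2)

lemma colnorm (n : ℕ) (α β : ℝ) (a : Fin n) :
    ∑ k : Fin n, (Cmat n α β k a) ^ 2 = ∑ i ∈ Finset.range (n - (a:ℕ)), cCoef α β i ^ 2 := by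
  have h1 : ∑ k : Fin n, (Cmat n α β k a) ^ 2
      = ∑ k ∈ Finset.range n,
          (if (a:ℕ) ≤ k then cCoef α β (k - (a:ℕ)) ^ 2 else 0) := by
    rw [← Fin.sum_univ_eq_sum_range (fun k => if (a:ℕ) ≤ k then cCoef α β (k - (a:ℕ)) ^ 2 else 0)]
    refine Finset.sum_congr rfl fun k _ => ?_
    simp only [Cmat, Matrix.of_apply]
    split <;> simp
  rw [h1, ← Finset.sum_subset (s₁ := Finset.Ico (a:ℕ) n)
      (fun x hx => Finset.mem_range.mpr (Finset.mem_Ico.mp hx).2)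
      (by intro x hx hnx
          rw [if_neg]
          intro h
          exact hnx (Finset.mem_Ico.mpr ⟨h, Finset.mem_range.mp hx⟩)),
    Finset.sum_Ico_eq_sum_range]
  refine Finset.sum_congr rfl fun i _ => ?_
  rw [if_pos (Nat.le_add_right _ _), Nat.add_sub_cancel_left]

lemma diag_CtC (n : ℕ) (α β : ℝ) (a : Fin n) :
    ((Cmat n α β)ᵀ * Cmat n α β) a a = ∑ i ∈ Finset.range (n - (a:ℕ)), cCoef α β i ^ 2 := by
  rw [← colnorm]
  simp [Matrix.mul_apply, Matrix.transpose_apply, sq]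

lemma sens_eq (n : ℕ) (hn : 1 ≤ n) (α β : ℝ) :
    sens n n 1 (Cmat n α β) = Real.sqrt (∑ i ∈ Finset.range n, cCoef α β i ^ 2) := by
  unfold sens
  congr 1
  set S := ∑ i ∈ Finset.range n, cCoef α β i ^ 2 with hS
  have hSnn : 0 ≤ S := Finset.sum_nonneg fun i _ => sq_nonneg _
  have hub : ∀ x ∈ { x : ℝ | ∃ π : Finset (Fin n), π.card ≤ 1 ∧
      (∀ i ∈ π, ∀ j ∈ π, i ≠ j → n ≤ Nat.dist (i : ℕ) (j : ℕ)) ∧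
      x = ∑ i ∈ π, ∑ j ∈ π, ((Cmat n α β)ᵀ * Cmat n α β) i j }, x ≤ S := by
    haveI : Nonempty (Fin n) := ⟨⟨0, hn⟩⟩
    rintro x ⟨π, hcard, -, rfl⟩
    obtain ⟨a, hsub⟩ := Finset.card_le_one_iff_subset_singleton.mp hcard
    rcases Finset.subset_singleton_iff.mp hsub with rfl | rfl
    · simpa using hSnn
    · rw [Finset.sum_singleton, Finset.sum_singleton, diag_CtC]
      exact Finset.sum_le_sum_of_subset_of_nonneg
        (Finset.range_subset_range.mpr (Nat.sub_le _ _)) (fun i _ _ => sq_nonneg _)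
  have hmem : S ∈ { x : ℝ | ∃ π : Finset (Fin n), π.card ≤ 1 ∧
      (∀ i ∈ π, ∀ j ∈ π, i ≠ j → n ≤ Nat.dist (i : ℕ) (j : ℕ)) ∧
      x = ∑ i ∈ π, ∑ j ∈ π, ((Cmat n α β)ᵀ * Cmat n α β) i j } := by
    refine ⟨{(⟨0, hn⟩ : Fin n)}, by simp, by simp, ?_⟩
    rw [Finset.sum_singleton, Finset.sum_singleton, diag_CtC]
    simp [hS]
  exact le_antisymm (csSup_le ⟨S, hmem⟩ hub) (le_csSup ⟨S, hub⟩ hmem)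

lemma frob_eq (n : ℕ) (α β : ℝ) :
    frob n (Cmat n α β) = Real.sqrt
      (∑ j ∈ Finset.range n, ∑ i ∈ Finset.range (n - j), cCoef α β i ^ 2) := by
  unfold frob
  congr 1
  rw [Finset.sum_comm]
  rw [← Fin.sum_univ_eq_sum_range (fun j => ∑ i ∈ Finset.range (n - j), cCoef α β i ^ 2)]
  exact Finset.sum_congr rfl fun j _ => colnorm n α β j

/-- in the single participation setting (`k = 1`, `b = n`),
`(1/n)·Σ_{j=0}^{n−1} Σ_{i=0}^{n−1−j} c_i² ≤ (1/√n)·sens_{1,n}(C_{α,β})·‖C_{α,β}‖_F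
≤ Σ_{i=0}^{n−1} c_i²`. -/
theorem error_sandwich_single_participation (n : ℕ) (hn : 1 ≤ n) (α β : ℝ)
    (hβ : 0 ≤ β) (hβα : β < α) (hα : α ≤ 1) :
    (1 / (n : ℝ)) * ∑ j ∈ Finset.range n, ∑ i ∈ Finset.range (n - j), cCoef α β i ^ 2 ≤
        (1 / Real.sqrt n) * sens n n 1 (Cmat n α β) * frob n (Cmat n α β) ∧
      (1 / Real.sqrt n) * sens n n 1 (Cmat n α β) * frob n (Cmat n α β) ≤
        ∑ i ∈ Finset.range n, cCoef α β i ^ 2 := by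
  have hnpos : (0:ℝ) < n := by exact_mod_cast hn
  have hn0 : (n:ℝ) ≠ 0 := ne_of_gt hnpos
  set S := ∑ i ∈ Finset.range n, cCoef α β i ^ 2 with hS
  set T := ∑ j ∈ Finset.range n, ∑ i ∈ Finset.range (n - j), cCoef α β i ^ 2 with hT
  have hSnn : 0 ≤ S := Finset.sum_nonneg fun i _ => sq_nonneg _
  have hTnn : 0 ≤ T := Finset.sum_nonneg fun j _ =>
    Finset.sum_nonneg fun i _ => sq_nonneg _
  have hTnS : T ≤ (n:ℝ) * S := by
    have h1 : T ≤ ∑ _j ∈ Finset.range n, S :=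
      Finset.sum_le_sum fun j _ => Finset.sum_le_sum_of_subset_of_nonneg
        (Finset.range_subset_range.mpr (Nat.sub_le _ _)) (fun i _ _ => sq_nonneg _)
    simpa [mul_comm] using h1
  rw [sens_eq n hn α β, frob_eq]
  have hmid : (1 / Real.sqrt n) * Real.sqrt S * Real.sqrt T
      = Real.sqrt ((n:ℝ)⁻¹ * S * T) := by
    rw [Real.sqrt_mul (by positivity), Real.sqrt_mul (by positivity),
      Real.sqrt_inv, one_div]
  rw [hmid]
  constructor
  · rw [show (1/(n:ℝ)) * T = Real.sqrt ((1/(n:ℝ) * T)^2) from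
      (Real.sqrt_sq (by positivity)).symm]
    apply Real.sqrt_le_sqrt
    have key : T^2 ≤ (n:ℝ) * S * T := by nlinarith
    have h2 : (1/(n:ℝ) * T)^2 = ((n:ℝ)^2)⁻¹ * T^2 := by field_simp
    have h3 : (n:ℝ)⁻¹ * S * T = ((n:ℝ)^2)⁻¹ * ((n:ℝ)*S*T) := by field_simp
    rw [h2, h3]
    exact mul_le_mul_of_nonneg_left key (by positivity)
  · have key : S * T ≤ (n:ℝ) * S^2 := by nlinarith
    have main : Real.sqrt ((n:ℝ)⁻¹ * S * T) ≤ Real.sqrt (S^2) := by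
      apply Real.sqrt_le_sqrt
      rw [show (n:ℝ)⁻¹ * S * T = ((n:ℝ))⁻¹ * (S*T) from by ring]
      calc ((n:ℝ))⁻¹ * (S*T) ≤ ((n:ℝ))⁻¹ * ((n:ℝ)*S^2) :=
          mul_le_mul_of_nonneg_left key (by positivity)
        _ = S^2 := by field_simp
    simpa [Real.sqrt_sq hSnn] using main
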